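/- Let f_1,…,f_n : ℝ^N → ℝ each be convex and L-smooth, and let f = (1/n)Σ_{i=1}^n f_i. For any points y_1,…,y_n ∈ ℝ^N, set ȳ = (1/n)Σ_i y_i, g = (1/n)Σ_i ∇f_i(y_i), and f̂ = (1/n)Σ_i [ f_i(y_i) + ⟨∇f_i(y_i), ȳ − y_i⟩ ]. Then for every ω ∈ ℝ^N: (1) f(ω) ≥ f̂ + ⟨g, ω − ȳ⟩, and (2) f(ω) ≤ f̂ + ⟨g, ω − ȳ⟩ + L‖ω − ȳ‖² + (L/n)Σ_{i=1}^n ‖y_i − ȳ‖². -/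

import Mathlib

open scoped RealInnerProductSpace

variable {E : Type*} [NormedAddCommGroup E] [InnerProductSpace ℝ E] [CompleteSpace E]

lemma aux_hasDerivAt (f : E → ℝ) (hdiff : Differentiable ℝ f) (u w : E) (t₀ : ℝ) :
    HasDerivAt (fun t : ℝ => f (u + t • (w - u)))
      ⟪gradient f (u + t₀ • (w - u)), w - u⟫ t₀ := by
  have hc : HasDerivAt (fun t : ℝ => u + t • (w - u)) (w - u) t₀ := by
    simpa using ((hasDerivAt_id t₀).smul_const (w - u)).const_add u
  have hf : HasFDerivAt f
      ((InnerProductSpace.toDual ℝ E) (gradient f (u + t₀ • (w - u)))) (u + t₀ • (w - u)) := by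
    have := (hdiff (u + t₀ • (w - u))).hasGradientAt
    rwa [hasGradientAt_iff_hasFDerivAt] at this
  have := hf.comp_hasDerivAt t₀ hc
  rw [InnerProductSpace.toDual_apply_apply] at this; exact this

lemma aux_convex_lb (f : E → ℝ) (hdiff : Differentiable ℝ f)
    (hconv : ConvexOn ℝ Set.univ f) (u w : E) :
    f u + ⟪gradient f u, w - u⟫ ≤ f w := by
  have hder := aux_hasDerivAt f hdiff u w 0
  simp only [zero_smul, add_zero] at hder
  have htend : Filter.Tendsto (slope (fun t : ℝ => f (u + t • (w - u))) 0)
      (nhdsWithin 0 (Set.Ioi 0)) (nhds ⟪gradient f u, w - u⟫) :=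
    (hasDerivAt_iff_tendsto_slope.mp hder).mono_left
      (nhdsWithin_mono 0 (by intro x hx; exact ne_of_gt hx))
  have hev : ∀ᶠ t in nhdsWithin (0:ℝ) (Set.Ioi 0),
      slope (fun t : ℝ => f (u + t • (w - u))) 0 t ≤ f w - f u := by
    filter_upwards [Ioo_mem_nhdsGT_of_mem (by constructor <;> norm_num :
      (0:ℝ) ∈ Set.Ico (0:ℝ) 1)] with t ht
    have h1 : u + t • (w - u) = (1 - t) • u + t • w := by
      simp [smul_sub, sub_smul]; abel
    have h2 := hconv.2 (Set.mem_univ u) (Set.mem_univ w)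
      (by linarith [ht.2] : (0:ℝ) ≤ 1 - t) (le_of_lt ht.1) (by ring)
    rw [← h1] at h2
    have ht0 : (0:ℝ) < t := ht.1
    simp only [smul_eq_mul] at h2
    rw [slope_def_field]
    simp only [zero_smul, add_zero, sub_zero]
    rw [div_le_iff₀ ht0]
    calc f (u + t • (w - u)) - f u ≤ (1 - t) * f u + t * f w - f u := by linarith
      _ = (f w - f u) * t := by ring
  exact by linarith [le_of_tendsto htend hev]

lemma aux_descent (f : E → ℝ) (hdiff : Differentiable ℝ f) (L : ℝ) (hL : 0 ≤ L)
    (hsmooth : ∀ u w, ‖gradient f u - gradient f w‖ ≤ L * ‖u - w‖) (u w : E) :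
    f w ≤ f u + ⟪gradient f u, w - u⟫ + L / 2 * ‖w - u‖ ^ 2 := by
  set c : ℝ → E := fun t => u + t • (w - u) with hc
  have hcont_grad : Continuous (gradient f) := by
    refine (LipschitzWith.of_dist_le_mul (K := Real.toNNReal L) fun x y => ?_).continuous
    simpa [dist_eq_norm, Real.coe_toNNReal L hL] using hsmooth x y
  have hccont : Continuous c := by continuity
  have hg'cont : Continuous (fun t : ℝ => ⟪gradient f (c t), w - u⟫) :=
    (hcont_grad.comp hccont).inner continuous_const
  have hftc : ∫ t in (0:ℝ)..1, ⟪gradient f (c t), w - u⟫ = f (c 1) - f (c 0) := by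
    refine intervalIntegral.integral_eq_sub_of_hasDerivAt (f := fun t : ℝ => f (c t)) (fun t _ => ?_)
      (hg'cont.intervalIntegrable 0 1)
    exact aux_hasDerivAt f hdiff u w t
  have hbound : ∫ t in (0:ℝ)..1, ⟪gradient f (c t), w - u⟫ ≤
      ∫ t in (0:ℝ)..1, (⟪gradient f u, w - u⟫ + L * ‖w - u‖ ^ 2 * t) := by
    refine intervalIntegral.integral_mono_on (by norm_num) (hg'cont.intervalIntegrable 0 1)
      (by exact Continuous.intervalIntegrable (by continuity) 0 1) (fun t ht => ?_)
    have h1 : ⟪gradient f (c t), w - u⟫ - ⟪gradient f u, w - u⟫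
        = ⟪gradient f (c t) - gradient f u, w - u⟫ := by
      rw [inner_sub_left]
    have h2 : ⟪gradient f (c t) - gradient f u, w - u⟫ ≤
        ‖gradient f (c t) - gradient f u‖ * ‖w - u‖ := real_inner_le_norm _ _
    have h3 : ‖gradient f (c t) - gradient f u‖ ≤ L * ‖c t - u‖ := hsmooth _ _
    have h4 : ‖c t - u‖ = t * ‖w - u‖ := by
      simp [hc, norm_smul, abs_of_nonneg ht.1]
    have h5 := mul_le_mul_of_nonneg_right h3 (norm_nonneg (w - u))
    rw [h4] at h5
    have h6 : L * (t * ‖w - u‖) * ‖w - u‖ = L * ‖w - u‖ ^ 2 * t := by ring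
    linarith
  have hval : ∫ t in (0:ℝ)..1, (⟪gradient f u, w - u⟫ + L * ‖w - u‖ ^ 2 * t)
      = ⟪gradient f u, w - u⟫ + L / 2 * ‖w - u‖ ^ 2 := by
    rw [intervalIntegral.integral_add (Continuous.intervalIntegrable (by continuity) 0 1)
      (Continuous.intervalIntegrable (by continuity) 0 1),
      intervalIntegral.integral_const_mul, integral_id]
    simp
    ring
  have hc0 : c 0 = u := by simp [hc]
  have hc1 : c 1 = w := by simp [hc]
  rw [hval] at hbound
  rw [hc0, hc1] at hftc
  linarith

/-- inexact gradient inequalities for the average of `n` convex,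
L-smooth functions evaluated at possibly different points `y i`. -/
theorem stmt_10 (n N : ℕ) (hn : 0 < n)
    (f : Fin n → EuclideanSpace ℝ (Fin N) → ℝ)
    (L : ℝ) (hL : 0 < L)
    (hdiff : ∀ i, Differentiable ℝ (f i))
    (hconv : ∀ i, ConvexOn ℝ Set.univ (f i))
    (hsmooth : ∀ i u w, ‖gradient (f i) u - gradient (f i) w‖ ≤ L * ‖u - w‖)
    (y : Fin n → EuclideanSpace ℝ (Fin N))
    (ybar : EuclideanSpace ℝ (Fin N)) (hybar : ybar = (n : ℝ)⁻¹ • ∑ i, y i)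
    (g : EuclideanSpace ℝ (Fin N)) (hg : g = (n : ℝ)⁻¹ • ∑ i, gradient (f i) (y i))
    (fhat : ℝ)
    (hfhat : fhat = (n : ℝ)⁻¹ * ∑ i, (f i (y i) + ⟪gradient (f i) (y i), ybar - y i⟫)) :
    ∀ ω : EuclideanSpace ℝ (Fin N),
      ((n : ℝ)⁻¹ * ∑ i, f i ω ≥ fhat + ⟪g, ω - ybar⟫) ∧
      ((n : ℝ)⁻¹ * ∑ i, f i ω ≤ fhat + ⟪g, ω - ybar⟫ + L * ‖ω - ybar‖ ^ 2
          + L / n * ∑ i, ‖y i - ybar‖ ^ 2) := by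
  intro ω
  have hnR : (0:ℝ) < n := by exact_mod_cast hn
  have hinv : (0:ℝ) ≤ (n:ℝ)⁻¹ := by positivity
  have hsplit : ∀ i, ⟪gradient (f i) (y i), ω - y i⟫
      = ⟪gradient (f i) (y i), ybar - y i⟫ + ⟪gradient (f i) (y i), ω - ybar⟫ := by
    intro i
    rw [← inner_add_right]
    congr 1
    abel
  have hgC : ⟪g, ω - ybar⟫ = (n:ℝ)⁻¹ * ∑ i, ⟪gradient (f i) (y i), ω - ybar⟫ := by
    rw [hg, real_inner_smul_left, sum_inner]
  constructor
  · have h1 : ∀ i ∈ Finset.univ,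
        (f i (y i) + ⟪gradient (f i) (y i), ybar - y i⟫) + ⟪gradient (f i) (y i), ω - ybar⟫
          ≤ f i ω := by
      intro i _
      have h := aux_convex_lb (f i) (hdiff i) (hconv i) (y i) ω
      rw [hsplit i] at h
      linarith
    have h2 := Finset.sum_le_sum h1
    rw [Finset.sum_add_distrib] at h2
    rw [ge_iff_le, hfhat, hgC, ← mul_add]
    exact mul_le_mul_of_nonneg_left h2 hinv
  · have hub : ∀ i ∈ Finset.univ, f i ω ≤
        ((f i (y i) + ⟪gradient (f i) (y i), ybar - y i⟫) + ⟪gradient (f i) (y i), ω - ybar⟫)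
          + (L * ‖ω - ybar‖ ^ 2 + L * ‖y i - ybar‖ ^ 2) := by
      intro i _
      have hd := aux_descent (f i) (hdiff i) L hL.le (hsmooth i) (y i) ω
      have he : (ω - ybar) - (y i - ybar) = ω - y i := by abel
      have h := norm_sub_le (ω - ybar) (y i - ybar)
      rw [he] at h
      have hns : ‖ω - y i‖ ^ 2 ≤ 2 * ‖ω - ybar‖ ^ 2 + 2 * ‖y i - ybar‖ ^ 2 := by
        have hsq := mul_self_le_mul_self (norm_nonneg (ω - y i)) h
        nlinarith [sq_nonneg (‖ω - ybar‖ - ‖y i - ybar‖)]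
      rw [hsplit i] at hd
      have h5 := mul_le_mul_of_nonneg_left hns (by linarith : (0:ℝ) ≤ L / 2)
      linarith
    have h2 := Finset.sum_le_sum hub
    simp only [Finset.sum_add_distrib, Finset.sum_const, Finset.card_univ, Fintype.card_fin,
      nsmul_eq_mul, ← Finset.mul_sum] at h2
    rw [hfhat, hgC, Finset.sum_add_distrib]
    have hmul := mul_le_mul_of_nonneg_left h2 hinv
    have hne : (n:ℝ) ≠ 0 := ne_of_gt hnR
    have hiden : (n:ℝ)⁻¹ * (∑ i, f i (y i) + ∑ i, ⟪gradient (f i) (y i), ybar - y i⟫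
          + ∑ i, ⟪gradient (f i) (y i), ω - ybar⟫
          + ((n:ℝ) * (L * ‖ω - ybar‖ ^ 2) + L * ∑ i, ‖y i - ybar‖ ^ 2))
        = (n:ℝ)⁻¹ * (∑ i, f i (y i) + ∑ i, ⟪gradient (f i) (y i), ybar - y i⟫)
          + (n:ℝ)⁻¹ * ∑ i, ⟪gradient (f i) (y i), ω - ybar⟫
          + L * ‖ω - ybar‖ ^ 2 + L / (n:ℝ) * ∑ i, ‖y i - ybar‖ ^ 2 := by
      field_simp
      ring
    linarith
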